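/- Let A : ℝ → Matrix n n ℂ be a continuous complex matrix-valued function and let Y : ℝ → Matrix n n ℂ satisfy Y'(s) = A(s) · Y(s) for all s and Y(0) = I. If ∫₀^t ‖A(τ)‖₂ dτ < π, then the spectrum of Y(t) is contained in ℂ \ (-∞,0]; in particular, Y(t) has no eigenvalue that is a non-positive real number. -/

import Mathlib

attribute [local instance] Matrix.normedAddCommGroup Matrix.normedSpace

/-- The spectral norm of a complex matrix: the operator norm of the associated linear map
between Euclidean spaces. -/
noncomputable def l2norm {n : Type*} [Fintype n] [DecidableEq n] (A : Matrix n n ℂ) : ℝ :=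
  ‖Matrix.toEuclideanCLM (𝕜 := ℂ) A‖

open scoped RealInnerProductSpace
open Topology Filter

set_option maxHeartbeats 1000000 in
private lemma aux_hasDerivAt_apply {n : Type*} [Fintype n] [DecidableEq n]
    (M : ℝ → Matrix n n ℂ) (M' : Matrix n n ℂ) (s : ℝ) (h : HasDerivAt M M' s)
    (v' : EuclideanSpace ℂ n) :
    HasDerivAt (fun s => Matrix.toEuclideanCLM (𝕜 := ℂ) (M s) v')
      (Matrix.toEuclideanCLM (𝕜 := ℂ) M' v') s := by
  let Φlin : Matrix n n ℂ →ₗ[ℂ] EuclideanSpace ℂ n :=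
    { toFun := fun B => Matrix.toEuclideanCLM (𝕜 := ℂ) B v'
      map_add' := by intro B C; simp
      map_smul' := by intro c B; simp }
  let Φ : Matrix n n ℂ →L[ℂ] EuclideanSpace ℂ n := LinearMap.toContinuousLinearMap Φlin
  have h1 := ((Φ.restrictScalars ℝ).hasFDerivAt (x := M s)).comp_hasDerivAt s h
  exact h1

private lemma aux_gronwall_rev {F : Type*} [NormedAddCommGroup F] [NormedSpace ℝ F]
    (u u' : ℝ → F) (hu : ∀ s, HasDerivAt u (u' s) s)
    (b K : ℝ) (hK : ∀ s ∈ Set.Icc 0 b, ‖u' s‖ ≤ K * ‖u s‖)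
    (s₀ : ℝ) (hs₀ : s₀ ∈ Set.Icc 0 b) :
    ‖u 0‖ ≤ ‖u s₀‖ * Real.exp (K * s₀) := by
  obtain ⟨hs₀0, hs₀b⟩ := hs₀
  set g : ℝ → F := fun σ => u (s₀ - σ) with hgdef
  have hg : ∀ σ, HasDerivAt g ((-1 : ℝ) • u' (s₀ - σ)) σ := by
    intro σ
    have hinner : HasDerivAt (fun σ : ℝ => s₀ - σ) (-1) σ := by
      simpa using (hasDerivAt_id σ).const_sub s₀
    exact (hu (s₀ - σ)).scomp σ hinner
  have hcont : ContinuousOn g (Set.Icc 0 s₀) :=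
    (Continuous.continuousOn (by
      have : Differentiable ℝ g := fun σ => (hg σ).differentiableAt
      exact this.continuous))
  have hder : ∀ σ ∈ Set.Ico 0 s₀, HasDerivWithinAt g ((-1 : ℝ) • u' (s₀ - σ)) (Set.Ici σ) σ :=
    fun σ _ => (hg σ).hasDerivWithinAt
  have hbound : ∀ σ ∈ Set.Ico 0 s₀, ‖(-1 : ℝ) • u' (s₀ - σ)‖ ≤ K * ‖g σ‖ + 0 := by
    intro σ hσ
    rw [norm_smul]
    simp only [norm_neg, norm_one, one_mul, add_zero]
    have hmem : s₀ - σ ∈ Set.Icc 0 b :=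
      ⟨by linarith [hσ.2], by linarith [hσ.1]⟩
    simpa [hgdef] using hK _ hmem
  have := norm_le_gronwallBound_of_norm_deriv_right_le hcont hder le_rfl hbound s₀
    (Set.right_mem_Icc.2 hs₀0)
  rw [gronwallBound_ε0] at this
  simpa [hgdef] using this

set_option maxHeartbeats 2000000 in
/-- If `Y` is the fundamental solution of `Y' = A(t) Y`, `Y(0) = I`, with `A` complex and
continuous, and `∫₀^t ‖A(τ)‖₂ dτ < π`, then the spectrum of `Y(t)` is contained in
`ℂ \ (-∞, 0]`: `Y(t)` has no eigenvalue that is a non-positive real number. -/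
theorem magnus_stmt3 {n : Type*} [Fintype n] [DecidableEq n]
    (A : ℝ → Matrix n n ℂ) (hA : Continuous A)
    (Y : ℝ → Matrix n n ℂ)
    (hY : ∀ s : ℝ, HasDerivAt Y (A s * Y s) s) (hY0 : Y 0 = 1)
    (t : ℝ) (ht : 0 < t)
    (hint : (∫ τ in (0:ℝ)..t, l2norm (A τ)) < Real.pi) :
    ∀ x : ℝ, x ≤ 0 → (x : ℂ) ∉ spectrum ℂ (Y t) := by
  intro x hx hspec
  rw [spectrum.mem_iff] at hspec
  have hdet : ((algebraMap ℂ (Matrix n n ℂ) (x:ℂ)) - Y t).det = 0 := by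
    by_contra hne
    exact hspec ((Matrix.isUnit_iff_isUnit_det _).2 (isUnit_iff_ne_zero.2 hne))
  obtain ⟨v, hv0, hv⟩ := (Matrix.exists_mulVec_eq_zero_iff).2 hdet
  have heig : (Y t).mulVec v = (x:ℂ) • v := by
    have h1 : (algebraMap ℂ (Matrix n n ℂ) (x:ℂ)).mulVec v - (Y t).mulVec v = 0 := by
      rw [← Matrix.sub_mulVec]; exact hv
    have h2 : (algebraMap ℂ (Matrix n n ℂ) (x:ℂ)).mulVec v = (x:ℂ) • v := by
      rw [Algebra.algebraMap_eq_smul_one, Matrix.smul_mulVec, Matrix.one_mulVec]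
    rw [h2] at h1
    exact (sub_eq_zero.mp h1).symm
  -- Euclidean space setup
  set v' : EuclideanSpace ℂ n := (WithLp.equiv 2 (n → ℂ)).symm v with hv'def
  have hv'0 : v' ≠ 0 := by simpa [hv'def] using hv0
  set u : ℝ → EuclideanSpace ℂ n := fun s => Matrix.toEuclideanCLM (𝕜 := ℂ) (Y s) v'
    with hudef
  set du : ℝ → EuclideanSpace ℂ n := fun s => Matrix.toEuclideanCLM (𝕜 := ℂ) (A s) (u s)
    with hdudef
  have hu : ∀ s, HasDerivAt u (du s) s := by
    intro s
    have h1 := aux_hasDerivAt_apply Y (A s * Y s) s (hY s) v'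
    have h2 : Matrix.toEuclideanCLM (𝕜 := ℂ) (A s * Y s) v'
        = Matrix.toEuclideanCLM (𝕜 := ℂ) (A s) (u s) := by
      rw [map_mul]; rfl
    rw [h2] at h1
    exact h1
  have hub : ∀ s, ‖du s‖ ≤ l2norm (A s) * ‖u s‖ :=
    fun s => (Matrix.toEuclideanCLM (𝕜 := ℂ) (A s)).le_opNorm (u s)
  have hu0 : u 0 = v' := by simp [hudef, hY0]
  have hut : u t = (x : ℂ) • v' := by
    have h1 : u t = (WithLp.equiv 2 (n → ℂ)).symm ((Y t).mulVec v) := rfl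
    rw [h1, heig]
    rfl
  have hucont : Continuous u :=
    Differentiable.continuous (fun s => (hu s).differentiableAt)
  -- bound the operator norms of A on [0, t]
  have hopcont : Continuous fun s => Matrix.toEuclideanCLM (𝕜 := ℂ) (A s) := by
    let L : Matrix n n ℂ →ₗ[ℂ]
        (EuclideanSpace ℂ n →L[ℂ] EuclideanSpace ℂ n) :=
      { toFun := fun B => Matrix.toEuclideanCLM (𝕜 := ℂ) B
        map_add' := by intro B C; simp
        map_smul' := by intro c B; simp }
    exact (LinearMap.continuous_of_finiteDimensional L).comp hA
  have hgcont : Continuous fun s => l2norm (A s) := hopcont.norm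
  obtain ⟨C, hC⟩ := (isCompact_Icc (a := (0:ℝ)) (b := t)).exists_bound_of_continuousOn
    hgcont.continuousOn
  -- positivity of ‖u s‖ on [0, t]
  have hpos : ∀ s ∈ Set.Icc 0 t, 0 < ‖u s‖ := by
    intro s hs
    have hKb : ∀ τ ∈ Set.Icc (0:ℝ) t, ‖du τ‖ ≤ (max C 0) * ‖u τ‖ := by
      intro τ hτ
      refine (hub τ).trans (mul_le_mul_of_nonneg_right ?_ (norm_nonneg _))
      exact le_trans (le_abs_self _) (le_trans (hC τ hτ) (le_max_left _ _))
    have hg := aux_gronwall_rev u du hu t (max C 0) hKb s hs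
    have h0 : 0 < ‖u 0‖ := by rw [hu0]; exact norm_pos_iff.2 hv'0
    by_contra hc
    push_neg at hc
    have : ‖u s‖ = 0 := le_antisymm hc (norm_nonneg _)
    rw [this, zero_mul] at hg
    linarith
  -- x must be negative
  have hxneg : x < 0 := by
    rcases lt_or_eq_of_le hx with h | h
    · exact h
    · exfalso
      have hut0 : u t = 0 := by rw [hut, h]; simp
      have h2 := hpos t ⟨le_of_lt ht, le_rfl⟩
      rw [hut0, norm_zero] at h2
      exact lt_irrefl 0 h2
  -- normalized solution
  set nm : ℝ → ℝ := fun s => ‖u s‖ with hnmdef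
  have hnmcont : Continuous nm := hucont.norm
  set w : ℝ → EuclideanSpace ℂ n := fun s => (nm s)⁻¹ • u s with hwdef
  have hwnorm : ∀ s ∈ Set.Icc 0 t, ‖w s‖ = 1 := by
    intro s hs
    show ‖(nm s)⁻¹ • u s‖ = 1
    rw [norm_smul, Real.norm_eq_abs, abs_inv, abs_of_nonneg (norm_nonneg _)]
    exact inv_mul_cancel₀ (ne_of_gt (hpos s hs))
  set f : ℝ → ℝ := fun s => ⟪w 0, w s⟫ with hfdef
  have h0mem : (0:ℝ) ∈ Set.Icc (0:ℝ) t := ⟨le_rfl, le_of_lt ht⟩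
  have htmem : t ∈ Set.Icc (0:ℝ) t := ⟨le_of_lt ht, le_rfl⟩
  have hw0norm : ‖w 0‖ = 1 := hwnorm 0 h0mem
  have hf0 : f 0 = 1 := by
    show ⟪w 0, w 0⟫ = 1
    rw [real_inner_self_eq_norm_sq, hw0norm]; norm_num
  have hnm0 : nm 0 = ‖v'‖ := by show ‖u 0‖ = ‖v'‖; rw [hu0]
  have hxsmul : (x : ℂ) • v' = x • v' := by
    rw [← smul_one_smul ℂ x v', Complex.real_smul, mul_one]
  have hnmt : nm t = (-x) * ‖v'‖ := by
    show ‖u t‖ = (-x) * ‖v'‖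
    rw [hut, norm_smul, Complex.norm_real, Real.norm_eq_abs, abs_of_neg hxneg]
  have hvn : ‖v'‖ ≠ 0 := ne_of_gt (norm_pos_iff.2 hv'0)
  have hx0 : x ≠ 0 := ne_of_lt hxneg
  have hwt : w t = -(w 0) := by
    show (nm t)⁻¹ • u t = -((nm 0)⁻¹ • u 0)
    rw [hnmt, hut, hxsmul, hnm0, hu0, smul_smul, ← neg_smul]
    congr 1
    field_simp
  have hft : f t = -1 := by
    show ⟪w 0, w t⟫ = -1
    rw [hwt, inner_neg_right, real_inner_self_eq_norm_sq, hw0norm]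
    norm_num
  -- the integral of the operator norm and the comparison phase function
  set I : ℝ → ℝ := fun s => ∫ τ in (0:ℝ)..s, l2norm (A τ) with hIdef
  have hI' : ∀ s, HasDerivAt I (l2norm (A s)) s := fun s =>
    intervalIntegral.integral_hasDerivAt_right (hgcont.intervalIntegrable _ _)
      (hgcont.stronglyMeasurableAtFilter _ _) hgcont.continuousAt
  have hIcont : Continuous I := Differentiable.continuous (fun s => (hI' s).differentiableAt)
  have hInonneg : ∀ s, 0 ≤ s → 0 ≤ I s := fun s hs =>
    intervalIntegral.integral_nonneg hs (fun τ _ => norm_nonneg _)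
  have hImono : ∀ a b : ℝ, 0 ≤ a → a ≤ b → I a ≤ I b := by
    intro a b _ hab
    have h1 := intervalIntegral.integral_add_adjacent_intervals
      (hgcont.intervalIntegrable (μ := MeasureTheory.volume) 0 a)
      (hgcont.intervalIntegrable (μ := MeasureTheory.volume) a b)
    have h2 : 0 ≤ ∫ τ in a..b, l2norm (A τ) :=
      intervalIntegral.integral_nonneg hab (fun τ _ => norm_nonneg _)
    show I a ≤ I b
    have h3 : I a + ∫ τ in a..b, l2norm (A τ) = I b := h1
    linarith
  have hIt : I t < Real.pi := hint
  set ε : ℝ := (Real.pi - I t) / (t + 2) with hεdef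
  have hεpos : 0 < ε := div_pos (by linarith) (by linarith)
  have hεt : ε * (t + 2) = Real.pi - I t := by
    rw [hεdef]; field_simp
  set φ : ℝ → ℝ := fun s => I s + ε * s + ε with hφdef
  have hφ' : ∀ s, HasDerivAt φ (l2norm (A s) + ε) s := by
    intro s
    have h1 : HasDerivAt (fun s : ℝ => ε * s) ε s := by
      simpa using (hasDerivAt_id s).const_mul ε
    exact ((hI' s).add h1).add_const ε
  have hφcont : Continuous φ := Differentiable.continuous (fun s => (hφ' s).differentiableAt)
  have hφt : φ t < Real.pi := by
    show I t + ε * t + ε < Real.pi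
    nlinarith [hεpos]
  have hφpos : ∀ s ∈ Set.Icc 0 t, 0 < φ s := by
    intro s hs
    have h1 := hInonneg s hs.1
    show 0 < I s + ε * s + ε
    nlinarith [hεpos, hs.1]
  have hφle : ∀ s ∈ Set.Icc 0 t, φ s ≤ φ t := by
    intro s hs
    have h1 := hImono s t hs.1 hs.2
    show I s + ε * s + ε ≤ I t + ε * t + ε
    nlinarith [hεpos, hs.2]
  have hεle : ε ≤ Real.pi := by
    nlinarith [hInonneg t (le_of_lt ht), Real.pi_pos, hεpos, ht, mul_pos hεpos ht]
  -- the comparison function ψ and the first touching point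
  set ψ : ℝ → ℝ := fun s => f s - Real.cos (φ s) with hψdef
  have hwcontOn : ContinuousOn w (Set.Icc 0 t) :=
    ((hnmcont.continuousOn).inv₀ (fun s hs => ne_of_gt (hpos s hs))).smul hucont.continuousOn
  have hfcontOn : ContinuousOn f (Set.Icc 0 t) := continuousOn_const.inner hwcontOn
  have hψcontOn : ContinuousOn ψ (Set.Icc 0 t) :=
    hfcontOn.sub ((Real.continuous_cos.comp hφcont).continuousOn)
  set S : Set ℝ := Set.Icc 0 t ∩ ψ ⁻¹' Set.Iic 0 with hSdef
  have hSclosed : IsClosed S :=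
    hψcontOn.preimage_isClosed_of_isClosed isClosed_Icc isClosed_Iic
  have htS : t ∈ S := by
    refine ⟨htmem, ?_⟩
    show ψ t ≤ 0
    show f t - Real.cos (φ t) ≤ 0
    rw [hft]
    linarith [Real.neg_one_le_cos (φ t)]
  have hSbdd : BddBelow S := ⟨0, fun s hs => hs.1.1⟩
  set s₀ : ℝ := sInf S with hs₀def
  have hs₀S : s₀ ∈ S := hSclosed.csInf_mem ⟨t, htS⟩ hSbdd
  have hs₀mem : s₀ ∈ Set.Icc 0 t := hs₀S.1
  have hψs₀ : ψ s₀ ≤ 0 := hs₀S.2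
  have hψ0 : 0 < ψ 0 := by
    show 0 < f 0 - Real.cos (φ 0)
    rw [hf0]
    have hφ0 : φ 0 = ε := by
      show I 0 + ε * 0 + ε = ε
      have : I 0 = 0 := intervalIntegral.integral_same
      rw [this]; ring
    rw [hφ0]
    have h1 : Real.cos ε < Real.cos 0 :=
      Real.cos_lt_cos_of_nonneg_of_le_pi le_rfl hεle hεpos
    rw [Real.cos_zero] at h1
    linarith
  have hs₀pos : 0 < s₀ := by
    rcases lt_or_eq_of_le hs₀mem.1 with h | h
    · exact h
    · exfalso; rw [← h] at hψs₀; linarith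
  have hgt : ∀ s, 0 ≤ s → s < s₀ → 0 < ψ s := by
    intro s h0s hss₀
    by_contra hc
    push_neg at hc
    have hsS : s ∈ S := ⟨⟨h0s, le_trans (le_of_lt hss₀) hs₀mem.2⟩, hc⟩
    exact notMem_of_lt_csInf hss₀ hSbdd hsS
  have hFeq : 𝓝[Set.Ico 0 s₀] s₀ = 𝓝[Set.Iio s₀] s₀ :=
    nhdsWithin_Ico_eq_nhdsLT hs₀pos
  have hψs₀0 : ψ s₀ = 0 := by
    refine le_antisymm hψs₀ ?_
    have hcw : ContinuousWithinAt ψ (Set.Icc 0 t) s₀ := hψcontOn s₀ hs₀mem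
    have hten : Filter.Tendsto ψ (𝓝[Set.Ico 0 s₀] s₀) (𝓝 (ψ s₀)) :=
      hcw.mono_left (nhdsWithin_mono _
        (fun s hs => ⟨hs.1, le_trans (le_of_lt hs.2) hs₀mem.2⟩))
    haveI : (𝓝[Set.Ico 0 s₀] s₀).NeBot := by rw [hFeq]; infer_instance
    refine ge_of_tendsto hten ?_
    filter_upwards [eventually_mem_nhdsWithin] with s hs
    exact le_of_lt (hgt s hs.1 hs.2)
  -- derivative computations at s₀
  set r : ℝ := nm s₀ with hrdef
  have hr : 0 < r := hpos s₀ hs₀mem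
  have hrn : r = ‖u s₀‖ := rfl
  have hq : HasDerivAt (fun s => ⟪u s, u s⟫) (⟪u s₀, du s₀⟫ + ⟪du s₀, u s₀⟫) s₀ :=
    (hu s₀).inner ℝ (hu s₀)
  have hq0 : ⟪u s₀, u s₀⟫ ≠ 0 := by
    rw [real_inner_self_eq_norm_sq]
    have : (0:ℝ) < ‖u s₀‖ := hr
    positivity
  have hsqrt_eq : (fun s => Real.sqrt ⟪u s, u s⟫) = nm := by
    funext s
    rw [real_inner_self_eq_norm_sq, Real.sqrt_sq (norm_nonneg _)]
  have hnm' : HasDerivAt nm (⟪u s₀, du s₀⟫ / r) s₀ := by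
    have h1 := (Real.hasDerivAt_sqrt hq0).comp s₀ hq
    have h1b : Real.sqrt ∘ (fun s => ⟪u s, u s⟫) = nm := by
      funext s
      simp only [Function.comp_apply]
      rw [real_inner_self_eq_norm_sq, Real.sqrt_sq (norm_nonneg _)]
    rw [h1b] at h1
    refine h1.congr_deriv ?_
    rw [real_inner_comm (u s₀) (du s₀), real_inner_self_eq_norm_sq,
      Real.sqrt_sq (norm_nonneg _), ← hrn]
    have hrne : r ≠ 0 := ne_of_gt hr
    field_simp
    ring
  set cc : ℝ := ⟪w s₀, du s₀⟫ with hccdef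
  have huw : u s₀ = r • w s₀ := by
    show u s₀ = r • (r⁻¹ • u s₀)
    rw [smul_smul, mul_inv_cancel₀ (ne_of_gt hr), one_smul]
  have hinnu : ⟪u s₀, du s₀⟫ = r * cc := by
    rw [hccdef]
    nth_rewrite 1 [huw]
    rw [real_inner_smul_left]
  set dw : EuclideanSpace ℂ n :=
    r⁻¹ • du s₀ + (-(⟪u s₀, du s₀⟫ / r) / r ^ 2) • u s₀ with hdwdef
  have hw' : HasDerivAt w dw s₀ := by
    have hinv : HasDerivAt (fun s => (nm s)⁻¹) (-(⟪u s₀, du s₀⟫ / r) / r ^ 2) s₀ :=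
      hnm'.inv (ne_of_gt hr)
    exact hinv.smul (hu s₀)
  have hrne : r ≠ 0 := ne_of_gt hr
  have hdw_eq : dw = r⁻¹ • (du s₀ - cc • w s₀) := by
    rw [hdwdef, hinnu, huw]
    match_scalars
    · ring
    · field_simp
  have hws₀norm : ‖w s₀‖ = 1 := hwnorm s₀ hs₀mem
  have horth : ⟪w s₀, dw⟫ = 0 := by
    rw [hdw_eq, real_inner_smul_right, inner_sub_right, real_inner_smul_right,
      real_inner_self_eq_norm_sq, hws₀norm, ← hccdef]
    ring
  have hdu_le : ‖du s₀‖ ≤ l2norm (A s₀) * r := by rw [hrn]; exact hub s₀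
  have hdwnorm : ‖dw‖ ≤ l2norm (A s₀) := by
    have h2 : ‖du s₀ - cc • w s₀‖ ^ 2 = ‖du s₀‖ ^ 2 - cc ^ 2 := by
      rw [norm_sub_sq_real, real_inner_smul_right (du s₀) (w s₀) cc,
        real_inner_comm (w s₀) (du s₀), ← hccdef,
        norm_smul cc (w s₀), hws₀norm, Real.norm_eq_abs, mul_one, sq_abs]
      ring
    have h3 : ‖dw‖ ^ 2 ≤ (l2norm (A s₀)) ^ 2 := by
      rw [hdw_eq, norm_smul, Real.norm_eq_abs, abs_inv, abs_of_pos hr, mul_pow, h2]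
      have h5 : ‖du s₀‖ ^ 2 ≤ (l2norm (A s₀)) ^ 2 * r ^ 2 := by
        nlinarith [hdu_le, norm_nonneg (du s₀)]
      rw [inv_pow, inv_mul_le_iff₀ (pow_pos hr 2)]
      nlinarith [sq_nonneg cc]
    calc ‖dw‖ = Real.sqrt (‖dw‖ ^ 2) := (Real.sqrt_sq (norm_nonneg _)).symm
      _ ≤ Real.sqrt ((l2norm (A s₀)) ^ 2) := Real.sqrt_le_sqrt h3
      _ = l2norm (A s₀) := Real.sqrt_sq (norm_nonneg _)
  have hf' : HasDerivAt f ⟪w 0, dw⟫ s₀ := by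
    have h1 := (hasDerivAt_const s₀ (w 0)).inner ℝ hw'
    simpa only [inner_zero_left, add_zero] using h1
  set p : EuclideanSpace ℂ n := w 0 - f s₀ • w s₀ with hpdef
  have hpinner : ⟪p, dw⟫ = ⟪w 0, dw⟫ := by
    rw [hpdef, inner_sub_left, real_inner_smul_left (w s₀) dw (f s₀), horth]
    ring
  have hfs₀def : ⟪w 0, w s₀⟫ = f s₀ := rfl
  have hpnorm : ‖p‖ ^ 2 = 1 - f s₀ ^ 2 := by
    rw [hpdef, norm_sub_sq_real, real_inner_smul_right (w 0) (w s₀) (f s₀), hfs₀def,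
      norm_smul (f s₀) (w s₀), hw0norm, hws₀norm, Real.norm_eq_abs, mul_one, sq_abs]
    ring
  have hfbound : |⟪w 0, dw⟫| ≤ Real.sqrt (1 - f s₀ ^ 2) * l2norm (A s₀) := by
    rw [← hpinner]
    have h2 : ‖p‖ = Real.sqrt (1 - f s₀ ^ 2) := by
      rw [← hpnorm, Real.sqrt_sq (norm_nonneg _)]
    calc |⟪p, dw⟫| ≤ ‖p‖ * ‖dw‖ := abs_real_inner_le_norm p dw
      _ ≤ Real.sqrt (1 - f s₀ ^ 2) * l2norm (A s₀) := by
          rw [h2]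
          exact mul_le_mul_of_nonneg_left hdwnorm (Real.sqrt_nonneg _)
  have hfs₀ : f s₀ = Real.cos (φ s₀) := by
    have h1 : f s₀ - Real.cos (φ s₀) = 0 := hψs₀0
    linarith
  have hφs₀pos : 0 < φ s₀ := hφpos s₀ hs₀mem
  have hφs₀lt : φ s₀ < Real.pi := lt_of_le_of_lt (hφle s₀ hs₀mem) hφt
  have hsin_pos : 0 < Real.sin (φ s₀) := Real.sin_pos_of_pos_of_lt_pi hφs₀pos hφs₀lt
  have hsqrt_sin : Real.sqrt (1 - f s₀ ^ 2) = Real.sin (φ s₀) := by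
    rw [hfs₀, ← Real.sin_sq]
    exact Real.sqrt_sq (le_of_lt hsin_pos)
  have hcos' : HasDerivAt (fun s => Real.cos (φ s))
      (-Real.sin (φ s₀) * (l2norm (A s₀) + ε)) s₀ :=
    (Real.hasDerivAt_cos (φ s₀)).comp s₀ (hφ' s₀)
  have hψ' : HasDerivAt ψ
      (⟪w 0, dw⟫ - -Real.sin (φ s₀) * (l2norm (A s₀) + ε)) s₀ :=
    hf'.sub hcos'
  have hd_le : ⟪w 0, dw⟫ - -Real.sin (φ s₀) * (l2norm (A s₀) + ε) ≤ 0 := by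
    have hslope := hasDerivAt_iff_tendsto_slope.1 hψ'
    have hmono : 𝓝[Set.Iio s₀] s₀ ≤ 𝓝[{s₀}ᶜ] s₀ :=
      nhdsWithin_mono _ (fun s hs => ne_of_lt hs)
    refine le_of_tendsto (hslope.mono_left hmono) ?_
    have hev1 : ∀ᶠ s in 𝓝[Set.Iio s₀] s₀, 0 < s :=
      eventually_nhdsWithin_of_eventually_nhds (eventually_gt_nhds hs₀pos)
    filter_upwards [eventually_mem_nhdsWithin, hev1] with s hs hs0
    have hslt : s < s₀ := hs
    have hψs : 0 < ψ s := hgt s (le_of_lt hs0) hslt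
    rw [slope_def_field]
    apply div_nonpos_of_nonneg_of_nonpos
    · rw [hψs₀0]; linarith
    · linarith
  have hd_pos : 0 < ⟪w 0, dw⟫ - -Real.sin (φ s₀) * (l2norm (A s₀) + ε) := by
    rw [hsqrt_sin] at hfbound
    have h1 := (abs_le.mp hfbound).1
    have h2 : ⟪w 0, dw⟫ - -Real.sin (φ s₀) * (l2norm (A s₀) + ε)
        = (⟪w 0, dw⟫ + Real.sin (φ s₀) * l2norm (A s₀)) + Real.sin (φ s₀) * ε := by ring
    have h3 := mul_pos hsin_pos hεpos
    rw [h2]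
    linarith
  linarith
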